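/- Let ζ = e^{2πi/6} and let H_144 be the 4×4 Hermitian matrix over ℤ[ζ] with diagonal entries 6, entries H_{i,i+1} = 2ζ-4 and H_{i+1,i} = -2ζ-2 for i = 1,2,3, and all other entries 0. Then H_144 is positive definite and det(H_144) = 144. -/

import Mathlib

open Complex Matrix ComplexOrder

theorem stmt_11 (ζ : ℂ) (hζ : ζ = Complex.exp (2 * Real.pi * Complex.I / 6))
    (H : Matrix (Fin 4) (Fin 4) ℂ)
    (hH : H = !![6, 2*ζ - 4, 0, 0;
                 -2*ζ - 2, 6, 2*ζ - 4, 0;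
                 0, -2*ζ - 2, 6, 2*ζ - 4;
                 0, 0, -2*ζ - 2, 6]) :
    H.PosDef ∧ H.det = 144 := by
  have hz : ζ = (1/2 : ℝ) + (Real.sqrt 3 / 2 : ℝ) * Complex.I := by
    rw [show (2 * (Real.pi:ℂ) * Complex.I / 6) = ((Real.pi/3 : ℝ):ℂ) * Complex.I by
        push_cast; ring,
      Complex.exp_mul_I, ← Complex.ofReal_cos, ← Complex.ofReal_sin] at hζ
    rw [hζ]
    norm_num [Real.cos_pi_div_three, Real.sin_pi_div_three]
  have h3 : Real.sqrt 3 * Real.sqrt 3 = 3 :=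
    Real.mul_self_sqrt (by norm_num)
  have hconj : (starRingEnd ℂ) ζ = 1 - ζ := by
    rw [hz, map_add, _root_.map_mul, Complex.conj_ofReal, Complex.conj_ofReal, Complex.conj_I]
    push_cast; ring
  have hz2 : ζ^2 = ζ - 1 := by
    rw [hz]; simp [Complex.ext_iff, pow_two]; constructor <;> nlinarith [h3]
  have hdet : H.det = 144 := by
    rw [hH]
    simp [Matrix.det_succ_row_zero, Fin.sum_univ_succ, Matrix.vecHead, Matrix.vecTail,
      Fin.succAbove]
    ring_nf
    linear_combination (16*ζ^2 - 16*ζ + 352) * hz2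
  refine ⟨Matrix.posDef_iff_dotProduct_mulVec.mpr ⟨?_, ?_⟩, hdet⟩
  · rw [hH]
    ext i j
    fin_cases i <;> fin_cases j <;>
      simp [Matrix.conjTranspose_apply, hconj, Matrix.vecHead, Matrix.vecTail] <;> ring
  · intro x hx
    have key : dotProduct (star x) (H *ᵥ x) =
        ((6 * Complex.normSq (x 0 + ((2*ζ-4)/6) * x 1)
          + 4 * Complex.normSq (x 1 + ((2*ζ-4)/4) * x 2)
          + 3 * Complex.normSq (x 2 + ((2*ζ-4)/3) * x 3)
          + 2 * Complex.normSq (x 3) : ℝ) : ℂ) := by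
      subst hH
      push_cast [Complex.normSq_eq_conj_mul_self]
      simp [dotProduct, Matrix.mulVec, Fin.sum_univ_four, map_add, map_sub, map_div₀,
        map_ofNat, hconj, Matrix.vecHead, Matrix.vecTail]
      linear_combination (4 * ((starRingEnd ℂ) (x 1) * x 1 / 6
        + (starRingEnd ℂ) (x 2) * x 2 / 4 + (starRingEnd ℂ) (x 3) * x 3 / 3)) * hz2
    rw [key]
    rw [Complex.zero_lt_real]
    have n0 := Complex.normSq_nonneg (x 0 + ((2*ζ-4)/6) * x 1)
    have n1 := Complex.normSq_nonneg (x 1 + ((2*ζ-4)/4) * x 2)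
    have n2 := Complex.normSq_nonneg (x 2 + ((2*ζ-4)/3) * x 3)
    have n3 := Complex.normSq_nonneg (x 3)
    by_cases h3' : x 3 = 0
    · by_cases h2' : x 2 = 0
      · by_cases h1' : x 1 = 0
        · have h0' : x 0 ≠ 0 := by
            intro h0'
            exact hx (funext fun i => by fin_cases i <;> assumption)
          have : 0 < Complex.normSq (x 0 + ((2*ζ-4)/6) * x 1) := by
            rw [h1']; simpa using Complex.normSq_pos.mpr h0'
          linarith
        · have : 0 < Complex.normSq (x 1 + ((2*ζ-4)/4) * x 2) := by
            rw [h2']; simpa using Complex.normSq_pos.mpr h1'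
          linarith
      · have : 0 < Complex.normSq (x 2 + ((2*ζ-4)/3) * x 3) := by
          rw [h3']; simpa using Complex.normSq_pos.mpr h2'
        linarith
    · have : 0 < Complex.normSq (x 3) := Complex.normSq_pos.mpr h3'
      linarith
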